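/- Let G be a countable subgroup of (ℝ,+). Then there exists an uncountable set A ⊆ (0,∞) such that the family of subgroups {aG}_{a∈A} of ℝ is independent, i.e., whenever a_1,…,a_n ∈ A are distinct and g_1,…,g_n ∈ G satisfy a_1 g_1 + ⋯ + a_n g_n = 0, then a_i g_i = 0 for all i. -/

import Mathlib

/-- The family of subgroups `{aG}_{a∈A}` of `(ℝ, +)` is independent: whenever
`a₁,…,aₙ ∈ A` are distinct and `g₁,…,gₙ ∈ G` with `∑ aᵢgᵢ = 0`, each `aᵢgᵢ = 0`. -/
def IndepDilates (G : AddSubgroup ℝ) (A : Set ℝ) : Prop :=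
  ∀ (n : ℕ) (a g : Fin n → ℝ), (∀ i, a i ∈ A) → Function.Injective a →
    (∀ i, g i ∈ G) → (∑ i, a i * g i) = 0 → ∀ i, a i * g i = 0

/-- For any countable subgroup `G` of `(ℝ, +)` there is an
uncountable set `A ⊆ (0, ∞)` such that the family `{aG}_{a∈A}` is independent. -/
theorem exists_uncountable_indep_dilates (G : AddSubgroup ℝ)
    (hG : (G : Set ℝ).Countable) :
    ∃ A : Set ℝ, A ⊆ Set.Ioi (0 : ℝ) ∧ ¬ A.Countable ∧ IndepDilates G A := by
  classical
  set K : Subfield ℝ := Subfield.closure (G : Set ℝ) with hK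
  have hKcount : Countable K := by
    have h1 := Subfield.cardinalMk_closure_le_max (G : Set ℝ)
    have h2 : Cardinal.mk (G : Set ℝ) ≤ Cardinal.aleph0 :=
      Cardinal.mk_le_aleph0_iff.mpr hG.to_subtype
    rw [← Cardinal.mk_le_aleph0_iff]
    exact h1.trans (max_le h2 le_rfl)
  -- the basis of ℝ over K
  set s : Set ℝ := Module.Basis.ofVectorSpaceIndex K ℝ with hs
  have hli : LinearIndependent K (fun x : s => (x : ℝ)) := by
    have := (Module.Basis.ofVectorSpace K ℝ).linearIndependent
    simpa only [funext fun x => Module.Basis.ofVectorSpace_apply_self K ℝ x] using this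
  -- s is uncountable
  have hsunc : ¬ s.Countable := by
    intro hc
    have : Countable s := hc.to_subtype
    have hspan : Submodule.span K (Set.range (fun x : s => (x : ℝ))) = ⊤ := by
      have hrange : Set.range ⇑(Module.Basis.ofVectorSpace K ℝ) = s := by
        ext y
        constructor
        · rintro ⟨z, rfl⟩
          rw [Module.Basis.ofVectorSpace_apply_self]; exact z.2
        · intro hy
          exact ⟨⟨y, hy⟩, Module.Basis.ofVectorSpace_apply_self K ℝ ⟨y, hy⟩⟩
      rw [Subtype.range_coe, ← hrange]
      exact Module.Basis.span_eq _
    have hcnt : Countable (Submodule.span K (Set.range (fun x : s => (x : ℝ)))) :=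
      inferInstance
    rw [hspan] at hcnt
    have h3 : ((⊤ : Submodule K ℝ) : Set ℝ).Countable := Set.countable_coe_iff.mp hcnt
    rw [Submodule.top_coe] at h3
    exact Cardinal.not_countable_real h3
  -- elements of s are nonzero
  have hne : ∀ x : s, (x : ℝ) ≠ 0 := fun x => hli.ne_zero x
  -- abs is injective on s
  have habs : Set.InjOn (fun x : ℝ => |x|) s := by
    intro x hx y hy hxy
    by_contra hne'
    rcases abs_eq_abs.mp hxy with h | h
    · exact hne' h
    · -- x = -y, so 1•x + 1•y = 0
      have hxy' : (⟨x, hx⟩ : s) ≠ ⟨y, hy⟩ := by simpa [Subtype.ext_iff] using hne'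
      have := linearIndependent_iff'.mp hli {⟨x, hx⟩, ⟨y, hy⟩} (fun _ => (1 : K)) ?_
        ⟨x, hx⟩ (by simp)
      · exact one_ne_zero this
      · rw [Finset.sum_pair hxy']
        show (1 : K) • x + (1 : K) • y = 0
        simp only [one_smul]
        linarith
  refine ⟨(fun x : ℝ => |x|) '' s, ?_, ?_, ?_⟩
  · rintro _ ⟨x, hx, rfl⟩
    exact abs_pos.mpr (hne ⟨x, hx⟩)
  · intro hc
    exact hsunc (Set.countable_of_injective_of_countable_image habs hc)
  · intro n a g ha hainj hg hsum i
    -- pick x i ∈ s with a i = |x i|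
    choose x hxs hxa using fun i => ha i
    -- signs
    set ε : Fin n → ℝ := fun i => if 0 ≤ x i then 1 else -1 with hε
    have hεK : ∀ i, ε i ∈ K := fun i => by
      by_cases h : 0 ≤ x i <;> simp [hε, h, K.one_mem, K.neg_mem K.one_mem]
    have hax : ∀ i, a i = ε i * x i := fun i => by
      rw [← hxa i, hε]
      by_cases h : 0 ≤ x i
      · simp [h, abs_of_nonneg h]
      · simp only [h, if_false]
        rw [abs_of_neg (not_le.mp h)]; ring
    have hgK : ∀ i, g i ∈ K := fun i => Subfield.subset_closure (hg i)
    -- x is injective into s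
    have hxinj : Function.Injective (fun i => (⟨x i, hxs i⟩ : s)) := by
      intro i j hij
      apply hainj
      rw [← hxa i, ← hxa j]
      simp only [Subtype.mk.injEq] at hij
      rw [hij]
    have hli2 := hli.comp _ hxinj
    rw [Fintype.linearIndependent_iff] at hli2
    have key := hli2 (fun i => ⟨ε i * g i, K.mul_mem (hεK i) (hgK i)⟩) ?_ i
    · have : ε i * g i = 0 := congrArg Subtype.val key
      rw [hax i, mul_assoc, mul_comm (x i) (g i), ← mul_assoc, this, zero_mul]
    · rw [← hsum]
      apply Finset.sum_congr rfl
      intro j _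
      show (ε j * g j) • (x j) = a j * g j
      show (ε j * g j) * (x j) = a j * g j
      rw [hax j]; ring
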